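/- Let G be a countable group, let φ be a minimal action of G on the line, and let H be a commensurated subgroup of G. If the restriction of φ to H has a global fixed point (there exists x ∈ ℝ with φ(h)(x) = x for all h ∈ H), then φ(h) is the identity of ℝ for every h ∈ H. -/

import Mathlib

open Topology Filter

/-!  `ℝ ≃o ℝ` is the group `Homeo₀(ℝ)` of orientation-preserving homeomorphisms of the
line (order isomorphisms of `ℝ`).  An action of a group `G` on the line is a group
homomorphism `G →* (ℝ ≃o ℝ)`. -/

/-- The underlying map of an action, as a point of the function space `G → ℝ → ℝ`
(equipped with the product topology of pointwise convergence and its Borel σ-algebra). -/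
def actMap {G : Type*} [Group G] (φ : G →* (ℝ ≃o ℝ)) : G → ℝ → ℝ := fun g => ⇑(φ g)

/-- An action is minimal if every orbit is dense. -/
def IsMinimalAction {G : Type*} [Group G] (φ : G →* (ℝ ≃o ℝ)) : Prop :=
  ∀ x : ℝ, Dense {y : ℝ | ∃ g : G, φ g x = y}

/-- Conjugation of (the underlying map of) an action by `f ∈ Homeo₀(ℝ)`. -/
def conjFun {G : Type*} (f : ℝ ≃o ℝ) (F : G → ℝ → ℝ) : G → ℝ → ℝ :=
  fun g x => f (F g (f.symm x))

/-- The space of minimal actions of `G` on the line, as a subset of the function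
space `G → ℝ → ℝ`. -/
def RepMin (G : Type*) [Group G] : Set (G → ℝ → ℝ) :=
  {F | ∃ φ : G →* (ℝ ≃o ℝ), IsMinimalAction φ ∧ F = actMap φ}

/-- `G` belongs to the class `𝒞`: the conjugacy relation on `RepMin G` is smooth, i.e.
there is a Borel map to `ℝ` whose fibers are exactly the conjugacy classes. -/
def ClassC (G : Type*) [Group G] : Prop :=
  ∃ r : (RepMin G) → ℝ, Measurable r ∧
    ∀ φ ψ : RepMin G, (r φ = r ψ ↔ ∃ f : ℝ ≃o ℝ, conjFun f (φ : G → ℝ → ℝ) = (ψ : G → ℝ → ℝ))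

/-- `H` is a commensurated subgroup of `G`: for every `g`, `H ∩ gHg⁻¹` has finite index
in both `H` and `gHg⁻¹`. -/
def Commensurated {G : Type*} [Group G] (H : Subgroup G) : Prop :=
  ∀ g : G, Subgroup.Commensurable H (Subgroup.map (MulAut.conj g).toMonoidHom H)

theorem stmt4 (G : Type*) [Group G] [Countable G]
    (φ : G →* (ℝ ≃o ℝ)) (hφ : IsMinimalAction φ)
    (H : Subgroup G) (hH : Commensurated H)
    (hfix : ∃ x : ℝ, ∀ h ∈ H, φ h x = x) :
    ∀ h ∈ H, ∀ y : ℝ, φ h y = y := by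

  obtain ⟨x, hx⟩ := hfix
  -- the fixed-point set of `H`
  set S : Set ℝ := {z : ℝ | ∀ h ∈ H, φ h z = z} with hS
  -- injectivity lemma for non-fixed points
  have aux_inj : ∀ (h : G) (y : ℝ), φ h y ≠ y →
      Function.Injective (fun n : ℕ => φ (h ^ n) y) := by
    intro h y hne
    have hstep : ∀ n : ℕ, φ (h ^ (n + 1)) y = φ (h ^ n) (φ h y) := by
      intro n; rw [pow_succ, map_mul]; rfl
    rcases hne.lt_or_gt with hlt | hlt
    · have : StrictAnti fun n : ℕ => φ (h ^ n) y := by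
        apply strictAnti_nat_of_succ_lt
        intro n
        rw [hstep]
        exact (φ (h ^ n)).strictMono hlt
      exact this.injective
    · have : StrictMono fun n : ℕ => φ (h ^ n) y := by
        apply strictMono_nat_of_lt_succ
        intro n
        rw [hstep]
        exact (φ (h ^ n)).strictMono hlt
      exact this.injective
  -- S is invariant under the whole group G
  have hinv : ∀ (g : G), ∀ z ∈ S, φ g z ∈ S := by
    intro g z hz h hh
    by_contra hne
    set H' : Subgroup G := Subgroup.map (MulAut.conj g⁻¹).toMonoidHom H with hH'
    have hfi : (H.subgroupOf H').FiniteIndex := ⟨(hH g⁻¹).1⟩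
    haveI := hfi
    haveI : Finite (H' ⧸ H.subgroupOf H') :=
      Subgroup.finite_quotient_of_finiteIndex
    have hmem : ∀ n : ℕ, g⁻¹ * h ^ n * g ∈ H' := by
      intro n
      refine ⟨h ^ n, pow_mem hh n, ?_⟩
      simp [MulAut.conj]
    set c : ℕ → H' ⧸ H.subgroupOf H' :=
      fun n => QuotientGroup.mk ⟨g⁻¹ * h ^ n * g, hmem n⟩ with hc
    have hu : Function.Injective (fun n : ℕ => φ (h ^ n) (φ g z)) := aux_inj h (φ g z) hne
    have hcinj : Function.Injective c := by
      intro n m hnm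
      apply hu
      have hk : (⟨g⁻¹ * h ^ n * g, hmem n⟩ : H')⁻¹ * ⟨g⁻¹ * h ^ m * g, hmem m⟩
          ∈ H.subgroupOf H' := (QuotientGroup.eq).1 hnm
      have hkG : g⁻¹ * (h ^ n)⁻¹ * h ^ m * g ∈ H := by
        have := hk
        simp only [Subgroup.mem_subgroupOf] at this
        convert this using 2
        push_cast
        group
      have h1 : φ (h ^ m) (φ g z) = φ (h ^ n) (φ g (φ (g⁻¹ * (h ^ n)⁻¹ * h ^ m * g) z)) := by
        have : h ^ m * g = h ^ n * g * (g⁻¹ * (h ^ n)⁻¹ * h ^ m * g) := by group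
        calc φ (h ^ m) (φ g z) = φ (h ^ m * g) z := by rw [map_mul]; rfl
          _ = φ (h ^ n * g * (g⁻¹ * (h ^ n)⁻¹ * h ^ m * g)) z := by rw [← this]
          _ = φ (h ^ n) (φ g (φ (g⁻¹ * (h ^ n)⁻¹ * h ^ m * g) z)) := by
              rw [map_mul, map_mul]; rfl
      show φ (h ^ n) (φ g z) = φ (h ^ m) (φ g z)
      rw [h1, hz _ hkG]
    haveI : Finite ℕ := Finite.of_injective c hcinj
    exact not_finite ℕ
  -- S is closed
  have hclosed : IsClosed S := by
    have : S = ⋂ h ∈ H, {z : ℝ | φ h z = z} := by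
      ext z; simp [hS, Set.mem_iInter]
    rw [this]
    exact isClosed_biInter fun h _ => isClosed_eq (φ h).continuous continuous_id
  -- the orbit of x is contained in S, and it is dense
  have hxS : x ∈ S := hx
  have hdense : Dense S := by
    apply Dense.mono _ (hφ x)
    rintro y ⟨g, rfl⟩
    exact hinv g x hxS
  have hSuniv : S = Set.univ := hclosed.closure_eq ▸ hdense.closure_eq
  intro h hh y
  have : y ∈ S := hSuniv ▸ Set.mem_univ y
  exact this h hh
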